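/- With weak Allee effect (M < 0), the equilibrium (0,C) of the system du/dτ = u(u+C)((u+A)(1-u)(u-M) - Qv), dv/dτ = S(u+A)(u - v + C)v is: a saddle point (Jacobian determinant AC²S(AM+CQ) < 0) if C < -AM/Q, and an attractor (determinant > 0 and trace -C(AS+AM+CQ) < 0) if C > -AM/Q. -/

import Mathlib

open Matrix

/-- Jacobian matrix (via partial derivatives) of the vector field
`F(u,v) = (u(u+C)((u+A)(1-u)(u-M) - Qv), S(u+A)(u-v+C)v)` at the point `(a,b)`. -/
noncomputable def jac (A C M Q S a b : ℝ) : Matrix (Fin 2) (Fin 2) ℝ :=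
  !![deriv (fun u => u * (u + C) * ((u + A) * (1 - u) * (u - M) - Q * b)) a,
     deriv (fun v => a * (a + C) * ((a + A) * (1 - a) * (a - M) - Q * v)) b;
     deriv (fun u => S * (u + A) * (u - b + C) * b) a,
     deriv (fun v => S * (a + A) * (a - v + C) * v) b]

lemma d00 (A C M Q : ℝ) :
    deriv (fun u : ℝ => u * (u + C) * ((u + A) * (1 - u) * (u - M) - Q * C)) 0
      = -C * (A * M + C * Q) := by
  have h : HasDerivAt (fun u : ℝ => u * (u + C) * ((u + A) * (1 - u) * (u - M) - Q * C))
      (-C * (A * M + C * Q)) 0 := by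
    have h0 := ((hasDerivAt_id 0).mul ((hasDerivAt_id 0).add_const C)).mul
      ((((hasDerivAt_id 0).add_const A).mul ((hasDerivAt_const 0 (1:ℝ)).sub (hasDerivAt_id 0))).mul
        ((hasDerivAt_id 0).sub_const M) |>.sub (hasDerivAt_const 0 (Q * C)))
    refine h0.congr_deriv ?_
    simp; ring
  exact h.deriv

lemma d01 (A C M Q : ℝ) :
    deriv (fun v : ℝ => (0:ℝ) * (0 + C) * ((0 + A) * (1 - 0) * (0 - M) - Q * v)) C = 0 := by
  have h : HasDerivAt (fun v : ℝ => (0:ℝ) * (0 + C) * ((0 + A) * (1 - 0) * (0 - M) - Q * v))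
      0 C := by
    have h0 := ((hasDerivAt_const C ((0:ℝ) * (0 + C))).mul
      ((hasDerivAt_const C ((0 + A) * (1 - 0) * (0 - M))).sub ((hasDerivAt_id C).const_mul Q)))
    refine h0.congr_deriv ?_
    simp
  exact h.deriv

lemma d10 (A C S : ℝ) :
    deriv (fun u : ℝ => S * (u + A) * (u - C + C) * C) 0 = S * A * C := by
  have h : HasDerivAt (fun u : ℝ => S * (u + A) * (u - C + C) * C)
      (S * A * C) 0 := by
    have h0 := ((((hasDerivAt_id 0).add_const A).const_mul S).mul
      (((hasDerivAt_id 0).sub_const C).add_const C)).mul_const C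
    refine h0.congr_deriv ?_
    simp
  exact h.deriv

lemma d11 (A C S : ℝ) :
    deriv (fun v : ℝ => S * (0 + A) * (0 - v + C) * v) C = -(S * A * C) := by
  have h : HasDerivAt (fun v : ℝ => S * (0 + A) * (0 - v + C) * v)
      (-(S * A * C)) C := by
    have h0 := ((((hasDerivAt_const C (0:ℝ)).sub (hasDerivAt_id C)).add_const C).const_mul
      (S * (0 + A))).mul (hasDerivAt_id C)
    refine h0.congr_deriv ?_
    simp
  exact h.deriv

/-- With weak Allee effect (`M < 0`), the equilibrium `(0,C)` is a saddle point
if `C < -AM/Q` (Jacobian determinant `AC²S(AM+CQ) < 0`) and an attractor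
(determinant positive, trace `-C(AS+AM+CQ)` negative) if `C > -AM/Q`. -/
theorem stmt5 (A C M Q S : ℝ) (hA : 0 < A) (hA1 : A < 1) (hC : 0 < C)
    (hS : 0 < S) (hQ : 0 < Q) (hM : M < 0) :
    (C < -(A * M) / Q →
      (jac A C M Q S 0 C).det = A * C ^ 2 * S * (A * M + C * Q) ∧
      (jac A C M Q S 0 C).det < 0) ∧
    (C > -(A * M) / Q →
      0 < (jac A C M Q S 0 C).det ∧
      (jac A C M Q S 0 C).trace = -C * (A * S + A * M + C * Q) ∧
      (jac A C M Q S 0 C).trace < 0) := by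
  have hdet : (jac A C M Q S 0 C).det = A * C ^ 2 * S * (A * M + C * Q) := by
    rw [jac, Matrix.det_fin_two_of, d00, d01, d10, d11]; ring
  have htr : (jac A C M Q S 0 C).trace = -C * (A * S + A * M + C * Q) := by
    rw [jac, Matrix.trace_fin_two_of, d00, d11]; ring
  constructor
  · intro h
    have h2 : A * M + C * Q < 0 := by
      have := (lt_div_iff₀ hQ).mp h
      nlinarith
    refine ⟨hdet, ?_⟩
    rw [hdet]
    have : 0 < A * C ^ 2 * S := by positivity
    nlinarith
  · intro h
    have h2 : 0 < A * M + C * Q := by nlinarith [(div_lt_iff₀ hQ).mp h]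
    have h3 : 0 < A * C ^ 2 * S := by positivity
    refine ⟨?_, htr, ?_⟩
    · rw [hdet]; nlinarith
    · rw [htr]; nlinarith
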